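/- Let $G_8$ be the graph obtained by merging a vertex of two 4-cycles. Then $G_8$ admits no $\Theta$-graceful labeling; concretely, there is no bijection $f$ from the vertices $\{v_1,\dots,v_7\}$ of $G_8$ onto $\{0,1,\dots,6\}$ such that, writing $f_i = f(v_i)$, one has $|f_1-f_2| = |f_3-f_7|$, $|f_1-f_7| = |f_2-f_3|$, $|f_3-f_4| = |f_5-f_6|$, $|f_3-f_6| = |f_4-f_5|$, and the four values $|f_1-f_2|, |f_1-f_7|, |f_3-f_4|, |f_3-f_6|$ are pairwise distinct. -/

import Mathlib

/-- The label of vertex `i` (0-indexed: vertex `vᵢ₊₁` of the paper) as an integer. -/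
def lab (f : Fin 7 → Fin 7) (i : Fin 7) : ℤ := ((f i : ℕ) : ℤ)

/-- `f` is a Θ-graceful labeling of the graph `G₈` (two 4-cycles `v₁v₂v₃v₇` and
`v₃v₄v₅v₆` glued at `v₃`; vertex `vᵢ` is index `i-1`): `f` is a bijection onto
`{0,…,6}`, both edges of each of the four Θ-classes get the same edge label, and
the four Θ-class labels are pairwise distinct. -/
def G8Graceful (f : Fin 7 → Fin 7) : Prop :=
  Function.Bijective f ∧
  |lab f 0 - lab f 1| = |lab f 2 - lab f 6| ∧
  |lab f 0 - lab f 6| = |lab f 1 - lab f 2| ∧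
  |lab f 2 - lab f 3| = |lab f 4 - lab f 5| ∧
  |lab f 2 - lab f 5| = |lab f 3 - lab f 4| ∧
  |lab f 0 - lab f 1| ≠ |lab f 0 - lab f 6| ∧
  |lab f 0 - lab f 1| ≠ |lab f 2 - lab f 3| ∧
  |lab f 0 - lab f 1| ≠ |lab f 2 - lab f 5| ∧
  |lab f 0 - lab f 6| ≠ |lab f 2 - lab f 3| ∧
  |lab f 0 - lab f 6| ≠ |lab f 2 - lab f 5| ∧
  |lab f 2 - lab f 3| ≠ |lab f 2 - lab f 5|

def dst (a b : Fin 7) : ℕ := max a.val b.val - min a.val b.val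

def good (l : List (Fin 7)) : Bool :=
  match l with
  | [a, b, c, d, e, g, h] =>
      !((dst a b == dst c h) && (dst a h == dst b c) &&
        (dst c d == dst e g) && (dst c g == dst d e) &&
        (dst a b != dst a h) && (dst a b != dst c d) &&
        (dst a b != dst c g) && (dst a h != dst c d) &&
        (dst a h != dst c g) && (dst c d != dst c g))
  | _ => true

def go : List (Fin 7) → Nat → Bool
  | acc, 0 => good acc
  | acc, n+1 => (List.finRange 7).all fun x => decide (x ∈ acc) || go (acc ++ [x]) n

set_option maxHeartbeats 2000000 in
lemma go_true : go [] 7 = true := by decide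

lemma go_spec : ∀ (ext acc : List (Fin 7)), go acc ext.length = true →
    (acc ++ ext).Nodup → good (acc ++ ext) = true := by
  intro ext
  induction ext with
  | nil => intro acc h hn; simpa [go] using h
  | cons x t ih =>
    intro acc h hn
    have h' := List.all_eq_true.mp h x (List.mem_finRange x)
    have hx : x ∉ acc := by
      intro hxm
      exact (List.disjoint_of_nodup_append hn) hxm List.mem_cons_self
    rw [decide_eq_false hx, Bool.false_or] at h'
    have := ih (acc ++ [x]) h' (by simpa using hn)
    simpa using this

lemma good_of_nodup (l : List (Fin 7)) (h7 : l.length = 7) (hn : l.Nodup) :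
    good l = true := by
  have := go_spec l [] (by rw [h7]; exact go_true) (by simpa using hn)
  simpa using this

lemma dst_cast : ∀ a b : Fin 7, (dst a b : ℤ) = |((a : ℕ) : ℤ) - ((b : ℕ) : ℤ)| := by
  decide

/-- `G₈` admits no Θ-graceful labeling. -/
theorem G8_not_theta_graceful : ¬ ∃ f : Fin 7 → Fin 7, G8Graceful f := by
  rintro ⟨f, hbij, h1, h2, h3, h4, n1, n2, n3, n4, n5, n6⟩
  have hl : (List.finRange 7).map f = [f 0, f 1, f 2, f 3, f 4, f 5, f 6] := by
    rfl
  have hnodup : ([f 0, f 1, f 2, f 3, f 4, f 5, f 6] : List (Fin 7)).Nodup := by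
    rw [← hl]
    exact (List.nodup_finRange 7).map hbij.injective
  have hg := good_of_nodup [f 0, f 1, f 2, f 3, f 4, f 5, f 6] rfl hnodup
  simp only [good, Bool.not_eq_true', Bool.and_eq_false_iff, beq_eq_false_iff_ne,
    bne_eq_false_iff_eq, ne_eq] at hg
  -- translate the hypotheses to `dst` equalities
  have key : ∀ i j k l : Fin 7,
      |lab f i - lab f j| = |lab f k - lab f l| ↔ dst (f i) (f j) = dst (f k) (f l) := by
    intro i j k l
    unfold lab
    rw [← dst_cast, ← dst_cast]
    exact_mod_cast Iff.rfl
  rw [key] at h1 h2 h3 h4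
  simp only [ne_eq, key] at n1 n2 n3 n4 n5 n6
  tauto
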